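/- ∑_{m₁,…,m₅ ≥ 1} 1/(m₁⁶ (m₁+m₂)⁶ (m₁+m₂+m₃)⁶ (m₁+m₂+m₃+m₄)⁶ (m₁+m₂+m₃+m₄+m₅)⁶) = π³⁰/1347828286825972065254765625. -/

import Mathlib

open scoped ENNReal

noncomputable def w (e : ℕ) (n : ℕ) : ℝ≥0∞ := ((n : ℝ≥0∞) ^ e)⁻¹

noncomputable def CS : List ℕ → ℕ → ℝ≥0∞
  | [], _ => 1
  | e :: L, b => ∑' m : ℕ+, w e (b + m) * CS L (b + m)

lemma pnat_lt_iff (x m : ℕ+) (h : x < m) : ∃ d : ℕ+, x + d = m := by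
  have h' : (x : ℕ) < (m : ℕ) := h
  refine ⟨⟨(m : ℕ) - (x : ℕ), by omega⟩, ?_⟩
  apply PNat.coe_injective
  have : ((x + ⟨(m : ℕ) - (x : ℕ), by omega⟩ : ℕ+) : ℕ) = (x:ℕ) + ((m : ℕ) - (x : ℕ)) := rfl
  rw [this]
  omega


noncomputable def eqA : ℕ+ × ℕ+ ≃ {p : ℕ+ × ℕ+ // p.1 < p.2} := by
  refine Equiv.ofBijective (fun q => ⟨(q.1, q.1 + q.2), PNat.lt_add_right q.1 q.2⟩) ⟨?_, ?_⟩
  · rintro ⟨x, d⟩ ⟨x', d'⟩ h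
    simp only [Subtype.mk_eq_mk, Prod.mk.injEq] at h
    obtain ⟨h1, h2⟩ := h
    subst h1
    exact Prod.ext rfl (add_left_cancel h2)
  · rintro ⟨⟨x, m⟩, hp⟩
    obtain ⟨d, hd⟩ := pnat_lt_iff x m hp
    exact ⟨(x, d), by simp [hd]⟩

noncomputable def eqD : ℕ+ ≃ {p : ℕ+ × ℕ+ // p.1 = p.2} := by
  refine Equiv.ofBijective (fun m => ⟨(m, m), rfl⟩) ⟨?_, ?_⟩
  · intro a b h
    simpa [Subtype.mk_eq_mk, Prod.mk.injEq] using h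
  · rintro ⟨⟨x, m⟩, hp⟩
    have : x = m := hp
    subst this
    exact ⟨x, rfl⟩

noncomputable def eqC : ℕ+ × ℕ+ ≃ {p : ℕ+ × ℕ+ // p.2 < p.1} := by
  refine Equiv.ofBijective (fun q => ⟨(q.1 + q.2, q.1), PNat.lt_add_right q.1 q.2⟩) ⟨?_, ?_⟩
  · rintro ⟨x, d⟩ ⟨x', d'⟩ h
    simp only [Subtype.mk_eq_mk, Prod.mk.injEq] at h
    obtain ⟨h2, h1⟩ := h
    subst h1
    exact Prod.ext rfl (add_left_cancel h2)
  · rintro ⟨⟨m, x⟩, hp⟩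
    obtain ⟨d, hd⟩ := pnat_lt_iff x m hp
    exact ⟨(x, d), by simp [hd]⟩

lemma tri (F : ℕ+ → ℕ+ → ℝ≥0∞) :
    ∑' x : ℕ+, ∑' m : ℕ+, F x m
      = (∑' x : ℕ+, ∑' d : ℕ+, F x (x + d)) + (∑' m : ℕ+, F m m)
        + (∑' x : ℕ+, ∑' d : ℕ+, F (x + d) x) := by
  classical
  have hprod : ∀ G : ℕ+ → ℕ+ → ℝ≥0∞, ∑' p : ℕ+ × ℕ+, G p.1 p.2 = ∑' x : ℕ+, ∑' m : ℕ+, G x m := by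
    intro G
    exact Summable.tsum_prod' ENNReal.summable (fun _ => ENNReal.summable)
  set A : Set (ℕ+ × ℕ+) := {p | p.1 < p.2} with hA
  set D : Set (ℕ+ × ℕ+) := {p | p.1 = p.2} with hD
  set C : Set (ℕ+ × ℕ+) := {p | p.2 < p.1} with hC
  have huniv : (Set.univ : Set (ℕ+ × ℕ+)) = (A ∪ D) ∪ C := by
    ext p
    simp only [Set.mem_univ, Set.mem_union, hA, hD, hC, Set.mem_setOf_eq, true_iff]
    rcases lt_trichotomy p.1 p.2 with h | h | h
    · exact Or.inl (Or.inl h)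
    · exact Or.inl (Or.inr h)
    · exact Or.inr h
  set G : ℕ+ × ℕ+ → ℝ≥0∞ := fun p => F p.1 p.2 with hG
  have hAsum : ∑' (p : A), G ↑p = ∑' x : ℕ+, ∑' d : ℕ+, F x (x + d) := by
    refine Eq.trans ?_ (hprod (fun x d => F x (x + d)))
    exact (eqA.tsum_eq (fun p : {p : ℕ+ × ℕ+ // p.1 < p.2} => G ↑p)).symm
  have hDsum : ∑' (p : D), G ↑p = ∑' m : ℕ+, F m m := by
    exact (eqD.tsum_eq (fun p : {p : ℕ+ × ℕ+ // p.1 = p.2} => G ↑p)).symm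
  have hCsum : ∑' (p : C), G ↑p = ∑' x : ℕ+, ∑' d : ℕ+, F (x + d) x := by
    refine Eq.trans ?_ (hprod (fun x d => F (x + d) x))
    exact (eqC.tsum_eq (fun p : {p : ℕ+ × ℕ+ // p.2 < p.1} => G ↑p)).symm
  calc ∑' x : ℕ+, ∑' m : ℕ+, F x m = ∑' p : ℕ+ × ℕ+, G p := (hprod F).symm
    _ = ∑' (p : (Set.univ : Set (ℕ+ × ℕ+))), G ↑p := (tsum_univ G).symm
    _ = ∑' (p : ↑((A ∪ D) ∪ C)), G ↑p := by rw [← huniv]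
    _ = (∑' (p : ↑(A ∪ D)), G ↑p) + ∑' (p : C), G ↑p := by
        refine Summable.tsum_union_disjoint ?_ ENNReal.summable ENNReal.summable
        rw [Set.disjoint_left]
        rintro ⟨x, m⟩ h1 h2
        simp only [hA, hD, hC, Set.mem_union, Set.mem_setOf_eq] at h1 h2
        rcases h1 with h1 | h1 <;> simp_all <;> exact absurd (h1.trans h2) (lt_irrefl _)
    _ = ((∑' (p : A), G ↑p) + ∑' (p : D), G ↑p) + ∑' (p : C), G ↑p := by
        congr 1
        refine Summable.tsum_union_disjoint ?_ ENNReal.summable ENNReal.summable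
        rw [Set.disjoint_left]
        rintro ⟨x, m⟩ h1 h2
        simp only [hA, hD, Set.mem_setOf_eq] at h1 h2
        exact absurd h2 (ne_of_lt h1)
    _ = _ := by rw [hAsum, hDsum, hCsum]

lemma w_add (c e n : ℕ) : w c n * w e n = w (c + e) n := by
  unfold w
  rw [pow_add, ENNReal.mul_inv (Or.inr (ENNReal.pow_ne_top (ENNReal.natCast_ne_top n)))
    (Or.inl (ENNReal.pow_ne_top (ENNReal.natCast_ne_top n)))]

lemma tsum_listsum {α : Type*} (l : List α) (F : α → ℕ+ → ℝ≥0∞) :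
    ∑' m : ℕ+, (l.map (fun a => F a m)).sum = (l.map (fun a => ∑' m : ℕ+, F a m)).sum := by
  induction l with
  | nil => simp
  | cons a t ih => simp [ENNReal.tsum_add, ih]

lemma mul_listsum {α : Type*} (x : ℝ≥0∞) (l : List α) (g : α → ℝ≥0∞) :
    x * (l.map g).sum = (l.map (fun a => x * g a)).sum := by
  induction l with
  | nil => simp
  | cons a t ih => simp [mul_add, ih]

def inss (c : ℕ) : List ℕ → List (List ℕ)
  | [] => [[c]]
  | e :: L => (c :: e :: L) :: (inss c L).map (e :: ·)

def bumps (c : ℕ) : List ℕ → List (List ℕ)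
  | [] => []
  | e :: L => ((c + e) :: L) :: (bumps c L).map (e :: ·)

lemma coe_add_split (b : ℕ) (x d : ℕ+) : b + ((x + d : ℕ+) : ℕ) = b + (x : ℕ) + (d : ℕ) := by
  rw [PNat.add_coe]; omega

lemma merge (c : ℕ) (L : List ℕ) : ∀ b : ℕ,
    (∑' x : ℕ+, w c (b + x)) * CS L b
      = ((inss c L).map (fun L' => CS L' b)).sum + ((bumps c L).map (fun L' => CS L' b)).sum := by
  induction L with
  | nil =>
    intro b
    simp [CS, inss, bumps, ENNReal.tsum_mul_right]
  | cons e L' ih =>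
    intro b
    have key : (∑' x : ℕ+, w c (b + x)) * CS (e :: L') b
        = ∑' x : ℕ+, ∑' m : ℕ+, (w c (b + x) * (w e (b + m) * CS L' (b + m))) := by
      rw [show CS (e :: L') b = ∑' m : ℕ+, w e (b + m) * CS L' (b + m) from rfl,
        ← ENNReal.tsum_mul_right]
      exact tsum_congr fun x => ENNReal.tsum_mul_left.symm
    rw [key, tri (fun x m => w c (b + x) * (w e (b + m) * CS L' (b + m)))]
    have hA : (∑' x : ℕ+, ∑' d : ℕ+,
          w c (b + x) * (w e (b + ((x + d : ℕ+) : ℕ)) * CS L' (b + ((x + d : ℕ+) : ℕ))))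
        = CS (c :: e :: L') b := by
      rw [show CS (c :: e :: L') b = ∑' x : ℕ+, w c (b + x) * CS (e :: L') (b + x) from rfl]
      refine tsum_congr fun x => ?_
      rw [ENNReal.tsum_mul_left]
      congr 1
      rw [show CS (e :: L') (b + (x:ℕ)) = ∑' d : ℕ+, w e (b + x + d) * CS L' (b + x + d) from rfl]
      exact tsum_congr fun d => by rw [coe_add_split b x d]
    have hD : (∑' m : ℕ+, w c (b + m) * (w e (b + m) * CS L' (b + m)))
        = CS ((c + e) :: L') b := by
      rw [show CS ((c + e) :: L') b = ∑' m : ℕ+, w (c + e) (b + m) * CS L' (b + m) from rfl]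
      exact tsum_congr fun m => by rw [← mul_assoc, w_add]
    have hC : (∑' x : ℕ+, ∑' d : ℕ+,
          w c (b + ((x + d : ℕ+) : ℕ)) * (w e (b + x) * CS L' (b + x)))
        = ((inss c L').map (fun L'' => CS (e :: L'') b)).sum
          + ((bumps c L').map (fun L'' => CS (e :: L'') b)).sum := by
      have step1 : ∀ x : ℕ+, (∑' d : ℕ+,
            w c (b + ((x + d : ℕ+) : ℕ)) * (w e (b + x) * CS L' (b + x)))
          = w e (b + x) * ((∑' d : ℕ+, w c (b + x + d)) * CS L' (b + x)) := by
        intro x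
        rw [mul_comm (∑' d : ℕ+, w c (b + (x:ℕ) + d)) (CS L' (b + x)), ← ENNReal.tsum_mul_left,
          ← ENNReal.tsum_mul_left]
        refine tsum_congr fun d => ?_
        rw [coe_add_split b x d]
        ring
      calc (∑' x : ℕ+, ∑' d : ℕ+,
            w c (b + ((x + d : ℕ+) : ℕ)) * (w e (b + x) * CS L' (b + x)))
          = ∑' x : ℕ+, w e (b + x) * (((inss c L').map (fun L'' => CS L'' (b + x))).sum
              + ((bumps c L').map (fun L'' => CS L'' (b + x))).sum) := by
            refine tsum_congr fun x => ?_
            rw [step1 x, ih (b + x)]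
        _ = ∑' x : ℕ+, ((((inss c L') ++ (bumps c L')).map
              (fun L'' => w e (b + x) * CS L'' (b + x))).sum) := by
            refine tsum_congr fun x => ?_
            rw [mul_add, mul_listsum, mul_listsum, List.map_append, List.sum_append]
        _ = (((inss c L') ++ (bumps c L')).map
              (fun L'' => ∑' x : ℕ+, w e (b + x) * CS L'' (b + x))).sum := by
            exact tsum_listsum _ _
        _ = _ := by
            rw [List.map_append, List.sum_append]
            rfl
    rw [hA, hD, hC]
    simp only [inss, bumps, List.map_cons, List.sum_cons, List.map_map]
    have : ∀ l : List (List ℕ), (l.map ((fun L' => CS L' b) ∘ (e :: ·))).sum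
        = (l.map (fun L'' => CS (e :: L'') b)).sum := fun l => rfl
    rw [this, this]
    ring

lemma w_ofReal (e n : ℕ) (hn : n ≠ 0) : w e n = ENNReal.ofReal (1 / (n : ℝ) ^ e) := by
  unfold w
  rw [one_div, ENNReal.ofReal_inv_of_pos (by positivity), ENNReal.ofReal_pow (by positivity),
    ENNReal.ofReal_natCast]

lemma hasSum_pnat {k : ℕ} (hk : k ≠ 0) {S : ℝ} (hS : HasSum (fun n : ℕ => 1 / (n : ℝ) ^ (2 * k)) S) :
    HasSum (fun m : ℕ+ => 1 / ((m : ℕ) : ℝ) ^ (2 * k)) S := by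
  have hi : Function.Injective ((↑·) : ℕ+ → ℕ) := fun a b h => PNat.coe_injective h
  refine (Function.Injective.hasSum_iff hi ?_).2 hS
  intro x hx
  have hx0 : x = 0 := by
    by_contra h
    exact hx ⟨⟨x, Nat.pos_of_ne_zero h⟩, rfl⟩
  subst hx0
  simp [zero_pow, Nat.mul_ne_zero two_ne_zero hk]

lemma pvalENN {k : ℕ} (hk : k ≠ 0) {S : ℝ} (hS : HasSum (fun n : ℕ => 1 / (n : ℝ) ^ (2 * k)) S) :
    ∑' m : ℕ+, w (2 * k) (m : ℕ) = ENNReal.ofReal S := by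
  have h1 := hasSum_pnat hk hS
  rw [← h1.tsum_eq, ENNReal.ofReal_tsum_of_nonneg (fun n => by positivity) h1.summable]
  exact tsum_congr fun m => w_ofReal _ _ m.ne_zero

lemma w_le {e : ℕ} (he : 6 ≤ e) (b : ℕ) (m : ℕ+) : w e (b + m) ≤ w 6 (m : ℕ) := by
  unfold w
  rw [ENNReal.inv_le_inv]
  have h1 : ((m : ℕ) : ℝ≥0∞) ≤ ((b + (m : ℕ) : ℕ) : ℝ≥0∞) := by
    exact_mod_cast Nat.cast_le.2 (Nat.le_add_left _ _)
  have hb : 1 ≤ b + (m : ℕ) := by have := m.pos; omega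
  have h2 : (1 : ℝ≥0∞) ≤ ((b + (m : ℕ) : ℕ) : ℝ≥0∞) := by exact_mod_cast hb
  calc ((m : ℕ) : ℝ≥0∞) ^ 6 ≤ ((b + (m : ℕ) : ℕ) : ℝ≥0∞) ^ 6 := pow_le_pow_left' h1 6
    _ ≤ ((b + (m : ℕ) : ℕ) : ℝ≥0∞) ^ e := pow_le_pow_right' h2 he

noncomputable def Z6 : ℝ≥0∞ := ∑' m : ℕ+, w 6 (m : ℕ)

lemma CS_le {L : List ℕ} (hL : ∀ e ∈ L, 6 ≤ e) : ∀ b : ℕ, CS L b ≤ Z6 ^ L.length := by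
  induction L with
  | nil => intro b; simp [CS]
  | cons e L' ih =>
    intro b
    have he : 6 ≤ e := hL e (List.mem_cons_self)
    have hL' : ∀ e' ∈ L', 6 ≤ e' := fun e' h => hL e' (List.mem_cons_of_mem e h)
    calc CS (e :: L') b = ∑' m : ℕ+, w e (b + (m : ℕ)) * CS L' (b + (m : ℕ)) := rfl
      _ ≤ ∑' m : ℕ+, w 6 (m : ℕ) * Z6 ^ L'.length :=
          ENNReal.tsum_le_tsum fun m => mul_le_mul' (w_le he b m) (ih hL' (b + (m : ℕ)))
      _ = Z6 ^ (L'.length + 1) := by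
          rw [ENNReal.tsum_mul_right, show (∑' m : ℕ+, w 6 (m : ℕ)) = Z6 from rfl, pow_succ,
            mul_comm]
      _ = Z6 ^ (e :: L').length := by simp

lemma inss_entries {c : ℕ} {L L' : List ℕ} (h : L' ∈ inss c L) : ∀ x ∈ L', x = c ∨ x ∈ L := by
  induction L generalizing L' with
  | nil =>
    simp only [inss, List.mem_singleton] at h
    subst h
    intro x hx
    simp only [List.mem_singleton] at hx
    exact Or.inl hx
  | cons e T ih =>
    simp only [inss, List.mem_cons, List.mem_map] at h
    rcases h with h | ⟨M, hM, rfl⟩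
    · subst h
      intro x hx
      simp only [List.mem_cons] at hx ⊢
      tauto
    · intro x hx
      simp only [List.mem_cons] at hx ⊢
      rcases hx with rfl | hx
      · tauto
      · rcases ih hM x hx with h | h <;> tauto

lemma bumps_entries {c : ℕ} {L L' : List ℕ} (h : L' ∈ bumps c L) :
    ∀ x ∈ L', (∃ e ∈ L, x = c + e) ∨ x ∈ L := by
  induction L generalizing L' with
  | nil => simp [bumps] at h
  | cons e T ih =>
    simp only [bumps, List.mem_cons, List.mem_map] at h
    rcases h with h | ⟨M, hM, rfl⟩
    · subst h
      intro x hx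
      simp only [List.mem_cons] at hx ⊢
      rcases hx with rfl | hx
      · exact Or.inl ⟨e, Or.inl rfl, rfl⟩
      · exact Or.inr (Or.inr hx)
    · intro x hx
      simp only [List.mem_cons] at hx ⊢
      rcases hx with rfl | hx
      · tauto
      · rcases ih hM x hx with ⟨e', he', rfl⟩ | h
        · exact Or.inl ⟨e', Or.inr he', rfl⟩
        · tauto

lemma list_sum_ne_top {l : List ℝ≥0∞} (h : ∀ x ∈ l, x ≠ ⊤) : l.sum ≠ ⊤ := by
  induction l with
  | nil => simp
  | cons a t ih =>
    simp only [List.sum_cons]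
    exact ENNReal.add_ne_top.2 ⟨h a (List.mem_cons_self),
      ih fun x hx => h x (List.mem_cons_of_mem a hx)⟩

lemma list_sum_toReal {l : List ℝ≥0∞} (h : ∀ x ∈ l, x ≠ ⊤) :
    l.sum.toReal = (l.map ENNReal.toReal).sum := by
  induction l with
  | nil => simp
  | cons a t ih =>
    simp only [List.sum_cons, List.map_cons]
    rw [ENNReal.toReal_add (h a (List.mem_cons_self))
      (list_sum_ne_top fun x hx => h x (List.mem_cons_of_mem a hx)),
      ih fun x hx => h x (List.mem_cons_of_mem a hx)]

lemma fct0 : Nat.factorial 0 = 1 := rfl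

lemma fct1 : Nat.factorial 1 = 1 := rfl

lemma fct2 : Nat.factorial 2 = 2 := rfl

lemma fct3 : Nat.factorial 3 = 6 := rfl

lemma fct4 : Nat.factorial 4 = 24 := rfl

lemma fct5 : Nat.factorial 5 = 120 := rfl

lemma fct6 : Nat.factorial 6 = 720 := rfl

lemma fct7 : Nat.factorial 7 = 5040 := rfl

lemma fct8 : Nat.factorial 8 = 40320 := rfl

lemma fct9 : Nat.factorial 9 = 362880 := rfl

lemma fct10 : Nat.factorial 10 = 3628800 := rfl

lemma fct11 : Nat.factorial 11 = 39916800 := rfl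

lemma fct12 : Nat.factorial 12 = 479001600 := rfl

lemma fct13 : Nat.factorial 13 = 6227020800 := rfl

lemma fct14 : Nat.factorial 14 = 87178291200 := rfl

lemma fct15 : Nat.factorial 15 = 1307674368000 := rfl

lemma fct16 : Nat.factorial 16 = 20922789888000 := rfl

lemma fct17 : Nat.factorial 17 = 355687428096000 := rfl

lemma fct18 : Nat.factorial 18 = 6402373705728000 := rfl

lemma fct19 : Nat.factorial 19 = 121645100408832000 := rfl

lemma fct20 : Nat.factorial 20 = 2432902008176640000 := rfl

lemma fct21 : Nat.factorial 21 = 51090942171709440000 := rfl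

lemma fct22 : Nat.factorial 22 = 1124000727777607680000 := rfl

lemma fct23 : Nat.factorial 23 = 25852016738884976640000 := rfl

lemma fct24 : Nat.factorial 24 = 620448401733239439360000 := rfl

lemma fct25 : Nat.factorial 25 = 15511210043330985984000000 := rfl

lemma fct26 : Nat.factorial 26 = 403291461126605635584000000 := rfl

lemma fct27 : Nat.factorial 27 = 10888869450418352160768000000 := rfl

lemma fct28 : Nat.factorial 28 = 304888344611713860501504000000 := rfl

lemma fct29 : Nat.factorial 29 = 8841761993739701954543616000000 := rfl

lemma fct30 : Nat.factorial 30 = 265252859812191058636308480000000 := rfl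

lemma Bp5 : bernoulli' 5 = (0 : ℚ) := by
  rw [bernoulli'_def]
  norm_num [Finset.sum_range_succ, Nat.cast_choose ℚ, fct0, fct1, fct2, fct3, fct4, fct5 ]

lemma Bp6 : bernoulli' 6 = (1/42 : ℚ) := by
  rw [bernoulli'_def]
  norm_num [Finset.sum_range_succ, Nat.cast_choose ℚ, fct0, fct1, fct2, fct3, fct4, fct5, fct6, Bp5]

lemma Bp7 : bernoulli' 7 = (0 : ℚ) := by
  rw [bernoulli'_def]
  norm_num [Finset.sum_range_succ, Nat.cast_choose ℚ, fct0, fct1, fct2, fct3, fct4, fct5, fct6, fct7, Bp5, Bp6]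

lemma Bp8 : bernoulli' 8 = (-1/30 : ℚ) := by
  rw [bernoulli'_def]
  norm_num [Finset.sum_range_succ, Nat.cast_choose ℚ, fct0, fct1, fct2, fct3, fct4, fct5, fct6, fct7, fct8, Bp5, Bp6, Bp7]

lemma Bp9 : bernoulli' 9 = (0 : ℚ) := by
  rw [bernoulli'_def]
  norm_num [Finset.sum_range_succ, Nat.cast_choose ℚ, fct0, fct1, fct2, fct3, fct4, fct5, fct6, fct7, fct8, fct9, Bp5, Bp6, Bp7, Bp8]

lemma Bp10 : bernoulli' 10 = (5/66 : ℚ) := by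
  rw [bernoulli'_def]
  norm_num [Finset.sum_range_succ, Nat.cast_choose ℚ, fct0, fct1, fct2, fct3, fct4, fct5, fct6, fct7, fct8, fct9, fct10, Bp5, Bp6, Bp7, Bp8, Bp9]

lemma Bp11 : bernoulli' 11 = (0 : ℚ) := by
  rw [bernoulli'_def]
  norm_num [Finset.sum_range_succ, Nat.cast_choose ℚ, fct0, fct1, fct2, fct3, fct4, fct5, fct6, fct7, fct8, fct9, fct10, fct11, Bp5, Bp6, Bp7, Bp8, Bp9, Bp10]

lemma Bp12 : bernoulli' 12 = (-691/2730 : ℚ) := by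
  rw [bernoulli'_def]
  norm_num [Finset.sum_range_succ, Nat.cast_choose ℚ, fct0, fct1, fct2, fct3, fct4, fct5, fct6, fct7, fct8, fct9, fct10, fct11, fct12, Bp5, Bp6, Bp7, Bp8, Bp9, Bp10, Bp11]

lemma Bp13 : bernoulli' 13 = (0 : ℚ) := by
  rw [bernoulli'_def]
  norm_num [Finset.sum_range_succ, Nat.cast_choose ℚ, fct0, fct1, fct2, fct3, fct4, fct5, fct6, fct7, fct8, fct9, fct10, fct11, fct12, fct13, Bp5, Bp6, Bp7, Bp8, Bp9, Bp10, Bp11, Bp12]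

lemma Bp14 : bernoulli' 14 = (7/6 : ℚ) := by
  rw [bernoulli'_def]
  norm_num [Finset.sum_range_succ, Nat.cast_choose ℚ, fct0, fct1, fct2, fct3, fct4, fct5, fct6, fct7, fct8, fct9, fct10, fct11, fct12, fct13, fct14, Bp5, Bp6, Bp7, Bp8, Bp9, Bp10, Bp11, Bp12, Bp13]

lemma Bp15 : bernoulli' 15 = (0 : ℚ) := by
  rw [bernoulli'_def]
  norm_num [Finset.sum_range_succ, Nat.cast_choose ℚ, fct0, fct1, fct2, fct3, fct4, fct5, fct6, fct7, fct8, fct9, fct10, fct11, fct12, fct13, fct14, fct15, Bp5, Bp6, Bp7, Bp8, Bp9, Bp10, Bp11, Bp12, Bp13, Bp14]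

lemma Bp16 : bernoulli' 16 = (-3617/510 : ℚ) := by
  rw [bernoulli'_def]
  norm_num [Finset.sum_range_succ, Nat.cast_choose ℚ, fct0, fct1, fct2, fct3, fct4, fct5, fct6, fct7, fct8, fct9, fct10, fct11, fct12, fct13, fct14, fct15, fct16, Bp5, Bp6, Bp7, Bp8, Bp9, Bp10, Bp11, Bp12, Bp13, Bp14, Bp15]

lemma Bp17 : bernoulli' 17 = (0 : ℚ) := by
  rw [bernoulli'_def]
  norm_num [Finset.sum_range_succ, Nat.cast_choose ℚ, fct0, fct1, fct2, fct3, fct4, fct5, fct6, fct7, fct8, fct9, fct10, fct11, fct12, fct13, fct14, fct15, fct16, fct17, Bp5, Bp6, Bp7, Bp8, Bp9, Bp10, Bp11, Bp12, Bp13, Bp14, Bp15, Bp16]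

lemma Bp18 : bernoulli' 18 = (43867/798 : ℚ) := by
  rw [bernoulli'_def]
  norm_num [Finset.sum_range_succ, Nat.cast_choose ℚ, fct0, fct1, fct2, fct3, fct4, fct5, fct6, fct7, fct8, fct9, fct10, fct11, fct12, fct13, fct14, fct15, fct16, fct17, fct18, Bp5, Bp6, Bp7, Bp8, Bp9, Bp10, Bp11, Bp12, Bp13, Bp14, Bp15, Bp16, Bp17]

lemma Bp19 : bernoulli' 19 = (0 : ℚ) := by
  rw [bernoulli'_def]
  norm_num [Finset.sum_range_succ, Nat.cast_choose ℚ, fct0, fct1, fct2, fct3, fct4, fct5, fct6, fct7, fct8, fct9, fct10, fct11, fct12, fct13, fct14, fct15, fct16, fct17, fct18, fct19, Bp5, Bp6, Bp7, Bp8, Bp9, Bp10, Bp11, Bp12, Bp13, Bp14, Bp15, Bp16, Bp17, Bp18]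

lemma Bp20 : bernoulli' 20 = (-174611/330 : ℚ) := by
  rw [bernoulli'_def]
  norm_num [Finset.sum_range_succ, Nat.cast_choose ℚ, fct0, fct1, fct2, fct3, fct4, fct5, fct6, fct7, fct8, fct9, fct10, fct11, fct12, fct13, fct14, fct15, fct16, fct17, fct18, fct19, fct20, Bp5, Bp6, Bp7, Bp8, Bp9, Bp10, Bp11, Bp12, Bp13, Bp14, Bp15, Bp16, Bp17, Bp18, Bp19]

lemma Bp21 : bernoulli' 21 = (0 : ℚ) := by
  rw [bernoulli'_def]
  norm_num [Finset.sum_range_succ, Nat.cast_choose ℚ, fct0, fct1, fct2, fct3, fct4, fct5, fct6, fct7, fct8, fct9, fct10, fct11, fct12, fct13, fct14, fct15, fct16, fct17, fct18, fct19, fct20, fct21, Bp5, Bp6, Bp7, Bp8, Bp9, Bp10, Bp11, Bp12, Bp13, Bp14, Bp15, Bp16, Bp17, Bp18, Bp19, Bp20]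

lemma Bp22 : bernoulli' 22 = (854513/138 : ℚ) := by
  rw [bernoulli'_def]
  norm_num [Finset.sum_range_succ, Nat.cast_choose ℚ, fct0, fct1, fct2, fct3, fct4, fct5, fct6, fct7, fct8, fct9, fct10, fct11, fct12, fct13, fct14, fct15, fct16, fct17, fct18, fct19, fct20, fct21, fct22, Bp5, Bp6, Bp7, Bp8, Bp9, Bp10, Bp11, Bp12, Bp13, Bp14, Bp15, Bp16, Bp17, Bp18, Bp19, Bp20, Bp21]

lemma Bp23 : bernoulli' 23 = (0 : ℚ) := by
  rw [bernoulli'_def]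
  norm_num [Finset.sum_range_succ, Nat.cast_choose ℚ, fct0, fct1, fct2, fct3, fct4, fct5, fct6, fct7, fct8, fct9, fct10, fct11, fct12, fct13, fct14, fct15, fct16, fct17, fct18, fct19, fct20, fct21, fct22, fct23, Bp5, Bp6, Bp7, Bp8, Bp9, Bp10, Bp11, Bp12, Bp13, Bp14, Bp15, Bp16, Bp17, Bp18, Bp19, Bp20, Bp21, Bp22]

lemma Bp24 : bernoulli' 24 = (-236364091/2730 : ℚ) := by
  rw [bernoulli'_def]
  norm_num [Finset.sum_range_succ, Nat.cast_choose ℚ, fct0, fct1, fct2, fct3, fct4, fct5, fct6, fct7, fct8, fct9, fct10, fct11, fct12, fct13, fct14, fct15, fct16, fct17, fct18, fct19, fct20, fct21, fct22, fct23, fct24, Bp5, Bp6, Bp7, Bp8, Bp9, Bp10, Bp11, Bp12, Bp13, Bp14, Bp15, Bp16, Bp17, Bp18, Bp19, Bp20, Bp21, Bp22, Bp23]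

lemma Bp25 : bernoulli' 25 = (0 : ℚ) := by
  rw [bernoulli'_def]
  norm_num [Finset.sum_range_succ, Nat.cast_choose ℚ, fct0, fct1, fct2, fct3, fct4, fct5, fct6, fct7, fct8, fct9, fct10, fct11, fct12, fct13, fct14, fct15, fct16, fct17, fct18, fct19, fct20, fct21, fct22, fct23, fct24, fct25, Bp5, Bp6, Bp7, Bp8, Bp9, Bp10, Bp11, Bp12, Bp13, Bp14, Bp15, Bp16, Bp17, Bp18, Bp19, Bp20, Bp21, Bp22, Bp23, Bp24]

lemma Bp26 : bernoulli' 26 = (8553103/6 : ℚ) := by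
  rw [bernoulli'_def]
  norm_num [Finset.sum_range_succ, Nat.cast_choose ℚ, fct0, fct1, fct2, fct3, fct4, fct5, fct6, fct7, fct8, fct9, fct10, fct11, fct12, fct13, fct14, fct15, fct16, fct17, fct18, fct19, fct20, fct21, fct22, fct23, fct24, fct25, fct26, Bp5, Bp6, Bp7, Bp8, Bp9, Bp10, Bp11, Bp12, Bp13, Bp14, Bp15, Bp16, Bp17, Bp18, Bp19, Bp20, Bp21, Bp22, Bp23, Bp24, Bp25]

lemma Bp27 : bernoulli' 27 = (0 : ℚ) := by
  rw [bernoulli'_def]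
  norm_num [Finset.sum_range_succ, Nat.cast_choose ℚ, fct0, fct1, fct2, fct3, fct4, fct5, fct6, fct7, fct8, fct9, fct10, fct11, fct12, fct13, fct14, fct15, fct16, fct17, fct18, fct19, fct20, fct21, fct22, fct23, fct24, fct25, fct26, fct27, Bp5, Bp6, Bp7, Bp8, Bp9, Bp10, Bp11, Bp12, Bp13, Bp14, Bp15, Bp16, Bp17, Bp18, Bp19, Bp20, Bp21, Bp22, Bp23, Bp24, Bp25, Bp26]

lemma Bp28 : bernoulli' 28 = (-23749461029/870 : ℚ) := by
  rw [bernoulli'_def]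
  norm_num [Finset.sum_range_succ, Nat.cast_choose ℚ, fct0, fct1, fct2, fct3, fct4, fct5, fct6, fct7, fct8, fct9, fct10, fct11, fct12, fct13, fct14, fct15, fct16, fct17, fct18, fct19, fct20, fct21, fct22, fct23, fct24, fct25, fct26, fct27, fct28, Bp5, Bp6, Bp7, Bp8, Bp9, Bp10, Bp11, Bp12, Bp13, Bp14, Bp15, Bp16, Bp17, Bp18, Bp19, Bp20, Bp21, Bp22, Bp23, Bp24, Bp25, Bp26, Bp27]

lemma Bp29 : bernoulli' 29 = (0 : ℚ) := by
  rw [bernoulli'_def]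
  norm_num [Finset.sum_range_succ, Nat.cast_choose ℚ, fct0, fct1, fct2, fct3, fct4, fct5, fct6, fct7, fct8, fct9, fct10, fct11, fct12, fct13, fct14, fct15, fct16, fct17, fct18, fct19, fct20, fct21, fct22, fct23, fct24, fct25, fct26, fct27, fct28, fct29, Bp5, Bp6, Bp7, Bp8, Bp9, Bp10, Bp11, Bp12, Bp13, Bp14, Bp15, Bp16, Bp17, Bp18, Bp19, Bp20, Bp21, Bp22, Bp23, Bp24, Bp25, Bp26, Bp27, Bp28]

lemma Bp30 : bernoulli' 30 = (8615841276005/14322 : ℚ) := by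
  rw [bernoulli'_def]
  norm_num [Finset.sum_range_succ, Nat.cast_choose ℚ, fct0, fct1, fct2, fct3, fct4, fct5, fct6, fct7, fct8, fct9, fct10, fct11, fct12, fct13, fct14, fct15, fct16, fct17, fct18, fct19, fct20, fct21, fct22, fct23, fct24, fct25, fct26, fct27, fct28, fct29, fct30, Bp5, Bp6, Bp7, Bp8, Bp9, Bp10, Bp11, Bp12, Bp13, Bp14, Bp15, Bp16, Bp17, Bp18, Bp19, Bp20, Bp21, Bp22, Bp23, Bp24, Bp25, Bp26, Bp27, Bp28, Bp29]
lemma hz1 : HasSum (fun n : ℕ => 1 / (n : ℝ) ^ (2 * 3)) (1 * Real.pi ^ 6 / 945) := by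
  have h := hasSum_zeta_nat (k := 3) (by norm_num)
  have hb : ((bernoulli (2 * 3) : ℚ) : ℝ) = ((bernoulli' 6 : ℚ) : ℝ) := by
    rw [bernoulli_eq_bernoulli'_of_ne_one (by norm_num)]
  rw [hb, Bp6] at h
  convert h using 1
  rw [show Nat.factorial (2 * 3) = 720 from fct6]
  push_cast
  norm_num
  ring

lemma hP1 : (∑' x : ℕ+, w 6 ((0 : ℕ) + (x : ℕ))).toReal = 1 * Real.pi ^ 6 / 945 := by
  have h := pvalENN (k := 3) (by norm_num) hz1
  have h2 : (∑' x : ℕ+, w 6 ((0 : ℕ) + (x : ℕ))) = ∑' x : ℕ+, w (2 * 3) (x : ℕ) := by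
    refine tsum_congr fun x => ?_
    norm_num
  rw [h2, h, ENNReal.toReal_ofReal (by positivity)]

lemma hz2 : HasSum (fun n : ℕ => 1 / (n : ℝ) ^ (2 * 6)) (691 * Real.pi ^ 12 / 638512875) := by
  have h := hasSum_zeta_nat (k := 6) (by norm_num)
  have hb : ((bernoulli (2 * 6) : ℚ) : ℝ) = ((bernoulli' 12 : ℚ) : ℝ) := by
    rw [bernoulli_eq_bernoulli'_of_ne_one (by norm_num)]
  rw [hb, Bp12] at h
  convert h using 1
  rw [show Nat.factorial (2 * 6) = 479001600 from fct12]
  push_cast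
  norm_num
  ring

lemma hP2 : (∑' x : ℕ+, w 12 ((0 : ℕ) + (x : ℕ))).toReal = 691 * Real.pi ^ 12 / 638512875 := by
  have h := pvalENN (k := 6) (by norm_num) hz2
  have h2 : (∑' x : ℕ+, w 12 ((0 : ℕ) + (x : ℕ))) = ∑' x : ℕ+, w (2 * 6) (x : ℕ) := by
    refine tsum_congr fun x => ?_
    norm_num
  rw [h2, h, ENNReal.toReal_ofReal (by positivity)]

lemma hz3 : HasSum (fun n : ℕ => 1 / (n : ℝ) ^ (2 * 9)) (43867 * Real.pi ^ 18 / 38979295480125) := by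
  have h := hasSum_zeta_nat (k := 9) (by norm_num)
  have hb : ((bernoulli (2 * 9) : ℚ) : ℝ) = ((bernoulli' 18 : ℚ) : ℝ) := by
    rw [bernoulli_eq_bernoulli'_of_ne_one (by norm_num)]
  rw [hb, Bp18] at h
  convert h using 1
  rw [show Nat.factorial (2 * 9) = 6402373705728000 from fct18]
  push_cast
  norm_num
  ring

lemma hP3 : (∑' x : ℕ+, w 18 ((0 : ℕ) + (x : ℕ))).toReal = 43867 * Real.pi ^ 18 / 38979295480125 := by
  have h := pvalENN (k := 9) (by norm_num) hz3
  have h2 : (∑' x : ℕ+, w 18 ((0 : ℕ) + (x : ℕ))) = ∑' x : ℕ+, w (2 * 9) (x : ℕ) := by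
    refine tsum_congr fun x => ?_
    norm_num
  rw [h2, h, ENNReal.toReal_ofReal (by positivity)]

lemma hz4 : HasSum (fun n : ℕ => 1 / (n : ℝ) ^ (2 * 12)) (236364091 * Real.pi ^ 24 / 201919571963756521875) := by
  have h := hasSum_zeta_nat (k := 12) (by norm_num)
  have hb : ((bernoulli (2 * 12) : ℚ) : ℝ) = ((bernoulli' 24 : ℚ) : ℝ) := by
    rw [bernoulli_eq_bernoulli'_of_ne_one (by norm_num)]
  rw [hb, Bp24] at h
  convert h using 1
  rw [show Nat.factorial (2 * 12) = 620448401733239439360000 from fct24]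
  push_cast
  norm_num
  ring

lemma hP4 : (∑' x : ℕ+, w 24 ((0 : ℕ) + (x : ℕ))).toReal = 236364091 * Real.pi ^ 24 / 201919571963756521875 := by
  have h := pvalENN (k := 12) (by norm_num) hz4
  have h2 : (∑' x : ℕ+, w 24 ((0 : ℕ) + (x : ℕ))) = ∑' x : ℕ+, w (2 * 12) (x : ℕ) := by
    refine tsum_congr fun x => ?_
    norm_num
  rw [h2, h, ENNReal.toReal_ofReal (by positivity)]

lemma hz5 : HasSum (fun n : ℕ => 1 / (n : ℝ) ^ (2 * 15)) (6892673020804 * Real.pi ^ 30 / 5660878804669082674070015625) := by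
  have h := hasSum_zeta_nat (k := 15) (by norm_num)
  have hb : ((bernoulli (2 * 15) : ℚ) : ℝ) = ((bernoulli' 30 : ℚ) : ℝ) := by
    rw [bernoulli_eq_bernoulli'_of_ne_one (by norm_num)]
  rw [hb, Bp30] at h
  convert h using 1
  rw [show Nat.factorial (2 * 15) = 265252859812191058636308480000000 from fct30]
  push_cast
  norm_num
  ring

lemma hP5 : (∑' x : ℕ+, w 30 ((0 : ℕ) + (x : ℕ))).toReal = 6892673020804 * Real.pi ^ 30 / 5660878804669082674070015625 := by
  have h := pvalENN (k := 15) (by norm_num) hz5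
  have h2 : (∑' x : ℕ+, w 30 ((0 : ℕ) + (x : ℕ))) = ∑' x : ℕ+, w (2 * 15) (x : ℕ) := by
    refine tsum_congr fun x => ?_
    norm_num
  rw [h2, h, ENNReal.toReal_ofReal (by positivity)]

lemma Z6_eq : Z6 = ENNReal.ofReal (1 * Real.pi ^ 6 / 945) := by
  have h := pvalENN (k := 3) (by norm_num) hz1
  exact h

lemma Z6_ne_top : Z6 ≠ ⊤ := by rw [Z6_eq]; exact ENNReal.ofReal_ne_top

lemma CS_ne_top {L : List ℕ} (hL : ∀ e ∈ L, 6 ≤ e) (b : ℕ) : CS L b ≠ ⊤ :=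
  ne_top_of_le_ne_top (ENNReal.pow_ne_top Z6_ne_top) (CS_le hL b)

lemma w_ne_top {e n : ℕ} (hn : n ≠ 0) : w e n ≠ ⊤ := by
  unfold w
  rw [Ne, ENNReal.inv_eq_top]
  exact pow_ne_zero _ (by exact_mod_cast hn)

lemma merge_real (c : ℕ) (hc : 6 ≤ c) (L : List ℕ) (hL : ∀ e ∈ L, 6 ≤ e) :
    (∑' x : ℕ+, w c ((0 : ℕ) + (x : ℕ))).toReal * (CS L 0).toReal
      = ((inss c L).map fun L' => (CS L' 0).toReal).sum
        + ((bumps c L).map fun L' => (CS L' 0).toReal).sum := by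
  have hmemi : ∀ x ∈ (inss c L).map fun L' => CS L' 0, x ≠ ⊤ := by
    rintro x hx
    simp only [List.mem_map] at hx
    obtain ⟨L', hL', rfl⟩ := hx
    refine CS_ne_top (fun e he => ?_) 0
    rcases inss_entries hL' e he with rfl | h
    · exact hc
    · exact hL e h
  have hmemb : ∀ x ∈ (bumps c L).map fun L' => CS L' 0, x ≠ ⊤ := by
    rintro x hx
    simp only [List.mem_map] at hx
    obtain ⟨L', hL', rfl⟩ := hx
    refine CS_ne_top (fun e he => ?_) 0
    rcases bumps_entries hL' e he with ⟨e', _, rfl⟩ | h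
    · omega
    · exact hL e h
  have h := congrArg ENNReal.toReal (merge c L 0)
  rw [ENNReal.toReal_mul, ENNReal.toReal_add (list_sum_ne_top hmemi) (list_sum_ne_top hmemb),
    list_sum_toReal hmemi, list_sum_toReal hmemb, List.map_map, List.map_map] at h
  exact h

lemma CS_toReal_cons {e : ℕ} {L : List ℕ} (hL : ∀ x ∈ L, 6 ≤ x) (b : ℕ) :
    (CS (e :: L) b).toReal
      = ∑' m : ℕ+, (1 / ((b + (m : ℕ) : ℕ) : ℝ) ^ e) * (CS L (b + (m : ℕ))).toReal := by
  rw [show CS (e :: L) b = ∑' m : ℕ+, w e (b + (m : ℕ)) * CS L (b + (m : ℕ)) from rfl,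
    ENNReal.tsum_toReal_eq (fun m => ENNReal.mul_ne_top
      (w_ne_top (by have := m.pos; omega)) (CS_ne_top hL _))]
  refine tsum_congr fun m => ?_
  rw [ENNReal.toReal_mul, w_ofReal e _ (by have := m.pos; omega),
    ENNReal.toReal_ofReal (by positivity)]

theorem stmt_13 :
    ∑' (m₁ : ℕ+), ∑' (m₂ : ℕ+), ∑' (m₃ : ℕ+), ∑' (m₄ : ℕ+), ∑' (m₅ : ℕ+),
        (1 : ℝ) /
          (((m₁ : ℕ) : ℝ) ^ 6 *
            (((m₁ : ℕ) : ℝ) + ((m₂ : ℕ) : ℝ)) ^ 6 *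
            (((m₁ : ℕ) : ℝ) + ((m₂ : ℕ) : ℝ) + ((m₃ : ℕ) : ℝ)) ^ 6 *
            (((m₁ : ℕ) : ℝ) + ((m₂ : ℕ) : ℝ) + ((m₃ : ℕ) : ℝ) + ((m₄ : ℕ) : ℝ)) ^ 6 *
            (((m₁ : ℕ) : ℝ) + ((m₂ : ℕ) : ℝ) + ((m₃ : ℕ) : ℝ) + ((m₄ : ℕ) : ℝ) + ((m₅ : ℕ) : ℝ)) ^ 6)
      = Real.pi ^ 30 / 1347828286825972065254765625 := by
  have hnil : (CS [] 0).toReal = 1 := by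
    rw [show CS [] 0 = 1 from rfl]; exact ENNReal.toReal_one
  have conv : (CS [6, 6, 6, 6, 6] 0).toReal
      = ∑' (m₁ : ℕ+), ∑' (m₂ : ℕ+), ∑' (m₃ : ℕ+), ∑' (m₄ : ℕ+), ∑' (m₅ : ℕ+),
        (1 : ℝ) /
          (((m₁ : ℕ) : ℝ) ^ 6 *
            (((m₁ : ℕ) : ℝ) + ((m₂ : ℕ) : ℝ)) ^ 6 *
            (((m₁ : ℕ) : ℝ) + ((m₂ : ℕ) : ℝ) + ((m₃ : ℕ) : ℝ)) ^ 6 *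
            (((m₁ : ℕ) : ℝ) + ((m₂ : ℕ) : ℝ) + ((m₃ : ℕ) : ℝ) + ((m₄ : ℕ) : ℝ)) ^ 6 *
            (((m₁ : ℕ) : ℝ) + ((m₂ : ℕ) : ℝ) + ((m₃ : ℕ) : ℝ) + ((m₄ : ℕ) : ℝ) + ((m₅ : ℕ) : ℝ)) ^ 6) := by
    rw [CS_toReal_cons (by decide) 0]
    refine tsum_congr fun m₁ => ?_
    rw [CS_toReal_cons (by decide), ← tsum_mul_left]
    refine tsum_congr fun m₂ => ?_
    rw [CS_toReal_cons (by decide), ← tsum_mul_left, ← tsum_mul_left]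
    refine tsum_congr fun m₃ => ?_
    rw [CS_toReal_cons (by decide), ← tsum_mul_left, ← tsum_mul_left, ← tsum_mul_left]
    refine tsum_congr fun m₄ => ?_
    rw [CS_toReal_cons (by decide), ← tsum_mul_left, ← tsum_mul_left, ← tsum_mul_left,
      ← tsum_mul_left]
    refine tsum_congr fun m₅ => ?_
    rw [show CS [] (0 + ↑m₁ + ↑m₂ + ↑m₃ + ↑m₄ + ↑m₅) = 1 from rfl, ENNReal.toReal_one]
    push_cast [zero_add]
    simp only [one_div, mul_inv]
    ring
  have q10 := merge_real 6 (by norm_num) [] (by decide)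
  have q20 := merge_real 12 (by norm_num) [] (by decide)
  have q30 := merge_real 18 (by norm_num) [] (by decide)
  have q40 := merge_real 24 (by norm_num) [] (by decide)
  have q50 := merge_real 30 (by norm_num) [] (by decide)
  have q21 := merge_real 6 (by norm_num) [6] (by decide)
  have q31 := merge_real 6 (by norm_num) [6, 6] (by decide)
  have q32 := merge_real 12 (by norm_num) [6] (by decide)
  have q41 := merge_real 6 (by norm_num) [6, 6, 6] (by decide)
  have q42 := merge_real 12 (by norm_num) [6, 6] (by decide)
  have q43 := merge_real 18 (by norm_num) [6] (by decide)
  have q51 := merge_real 6 (by norm_num) [6, 6, 6, 6] (by decide)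
  have q52 := merge_real 12 (by norm_num) [6, 6, 6] (by decide)
  have q53 := merge_real 18 (by norm_num) [6, 6] (by decide)
  have q54 := merge_real 24 (by norm_num) [6] (by decide)
  simp only [inss, bumps, List.map_cons, List.map_nil, List.sum_cons, List.sum_nil, add_zero,
    hnil, mul_one, show (6 + 6 : ℕ) = 12 from rfl, show (12 + 6 : ℕ) = 18 from rfl,
    show (18 + 6 : ℕ) = 24 from rfl, show (24 + 6 : ℕ) = 30 from rfl] at q10 q20 q30 q40 q50 q21 q31 q32 q41 q42 q43 q51 q52 q53 q54
  have v6 : (CS [6] 0).toReal = 1 * Real.pi ^ 6 / 945 := by rw [← q10]; exact hP1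
  have v12 : (CS [12] 0).toReal = 691 * Real.pi ^ 12 / 638512875 := by rw [← q20]; exact hP2
  have v18 : (CS [18] 0).toReal = 43867 * Real.pi ^ 18 / 38979295480125 := by
    rw [← q30]; exact hP3
  have v24 : (CS [24] 0).toReal = 236364091 * Real.pi ^ 24 / 201919571963756521875 := by
    rw [← q40]; exact hP4
  have v30 : (CS [30] 0).toReal
      = 6892673020804 * Real.pi ^ 30 / 5660878804669082674070015625 := by
    rw [← q50]; exact hP5
  rw [hP1, v6, v12] at q21
  have v66 : (CS [6, 6] 0).toReal = 4 * Real.pi ^ 12 / 212837625 := by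
    linear_combination (-1 / 2 : ℝ) * q21
  rw [hP1, v66] at q31
  rw [hP2, v6, v18] at q32
  have v666 : (CS [6, 6, 6] 0).toReal = 2 * Real.pi ^ 18 / 64965492466875 := by
    linear_combination (-1 / 3 : ℝ) * q31 + (1 / 3 : ℝ) * q32
  rw [hP1, v666] at q41
  rw [hP2, v66] at q42
  rw [hP3, v6, v24] at q43
  have v6666 : (CS [6, 6, 6, 6] 0).toReal = 4 * Real.pi ^ 24 / 432684797065192546875 := by
    linear_combination (-1 / 4 : ℝ) * q41 + (1 / 4 : ℝ) * q42 - (1 / 4 : ℝ) * q43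
  rw [hP1, v6666] at q51
  rw [hP2, v666] at q52
  rw [hP3, v66] at q53
  rw [hP4, v6, v30] at q54
  rw [← conv]
  linear_combination (-1 / 5 : ℝ) * q51 + (1 / 5 : ℝ) * q52 - (1 / 5 : ℝ) * q53
    + (1 / 5 : ℝ) * q54
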